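/- Let f : (0,∞) → ℝ be differentiable and convex with f(1) = 0, and let 0 < r < 1 < R. Then the secant bound B(r,R) = [(R−1)f(r) + (1−r)f(R)]/(R−r) satisfies B(r,R) ≤ (1/4)(R−r)[f'(R) − f'(r)]. -/
import Mathlib

theorem secant_le_gradient_bound (f : ℝ → ℝ)
    (hconv : ConvexOn ℝ (Set.Ioi (0 : ℝ)) f)
    (hdiff : ∀ x : ℝ, 0 < x → DifferentiableAt ℝ f x) (hf1 : f 1 = 0)
    (r R : ℝ) (hr : 0 < r) (hr1 : r < 1) (h1R : 1 < R) :
    ((R - 1) * f r + (1 - r) * f R) / (R - r) ≤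
      (1 / 4) * (R - r) * (deriv f R - deriv f r) := by
  have hR0 : (0:ℝ) < R := lt_trans one_pos h1R
  have hrS : r ∈ Set.Ioi (0:ℝ) := hr
  have h1S : (1:ℝ) ∈ Set.Ioi (0:ℝ) := Set.mem_Ioi.mpr one_pos
  have hRS : R ∈ Set.Ioi (0:ℝ) := hR0
  have hrR : r < R := lt_trans hr1 h1R
  have h1 : deriv f r ≤ slope f r 1 := hconv.deriv_le_slope hrS h1S hr1 (hdiff r hr)
  have h2 : slope f 1 R ≤ deriv f R := hconv.slope_le_deriv h1S hRS h1R (hdiff R hR0)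
  have hd : deriv f r ≤ deriv f R :=
    (hconv.deriv_le_slope hrS hRS hrR (hdiff r hr)).trans
      (hconv.slope_le_deriv hrS hRS hrR (hdiff R hR0))
  rw [slope_def_field, hf1] at h1
  rw [slope_def_field, hf1] at h2
  have h1r : (0:ℝ) < 1 - r := by linarith
  have hR1 : (0:ℝ) < R - 1 := by linarith
  have hRr : (0:ℝ) < R - r := by linarith
  have fr : f r ≤ -(deriv f r) * (1 - r) := by
    have := (le_div_iff₀ h1r).mp h1; linarith
  have fR : f R ≤ deriv f R * (R - 1) := by
    have := (div_le_iff₀ hR1).mp h2; linarith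
  rw [div_le_iff₀ hRr]
  nlinarith [sq_nonneg (R + r - 2), mul_le_mul_of_nonneg_left fr hR1.le,
    mul_le_mul_of_nonneg_left fR h1r.le, sq_nonneg (R - r)]
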